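/- Let K be a finite field of characteristic p, V a finite-dimensional K-vector space, j : V × V → K a nondegenerate alternating K-bilinear form, W a nonzero 𝔽_p-vector space, and π : K → W a surjective 𝔽_p-linear map; set b = π∘j. Let A = {f ∈ End_{𝔽_p}(V) : there exists g ∈ End_{𝔽_p}(V) with b(f(u),v) = b(u,g(v)) for all u,v ∈ V} (the restriction to the first coordinate of the adjoint ring Adj(b)). Then A is a subring of End_{𝔽_p}(V) containing End_K(V), A is a simple ring, V is a simple (irreducible) A-module, and the center k of A is a field isomorphic to a subfield of K, with A equal to the full ring End_k(V) of k-linear endomorphisms of V for the induced k-module structure on V. -/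

import Mathlib

set_option synthInstance.maxHeartbeats 1000000
set_option maxHeartbeats 1000000
set_option linter.unusedSectionVars false

/-- Promote an additive map between `ZMod p`-modules to a linear map. -/
def zlin (p : ℕ) {M N : Type} [AddCommGroup M] [AddCommGroup N] [Module (ZMod p) M]
    [Module (ZMod p) N] (f : M →+ N) : M →ₗ[ZMod p] N :=
  { toFun := f, map_add' := f.map_add, map_smul' := fun c x => ZMod.map_smul f c x }

lemma simple_of_equiv {R S : Type} [Ring R] [IsSimpleRing R] [Ring S] (e : R ≃+* S) :
    IsSimpleRing S := by
  haveI : Nontrivial S := ⟨e 0, e 1, fun h => zero_ne_one (e.injective h)⟩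
  rw [IsSimpleRing.iff_injective_ringHom_or_subsingleton_codomain]
  intro T _ f
  rcases IsSimpleRing.injective_ringHom_or_subsingleton_codomain (f.comp e.toRingHom) with h | h
  · refine Or.inl fun a b hab => ?_
    have h2 : (f.comp e.toRingHom) (e.symm a) = (f.comp e.toRingHom) (e.symm b) := by
      simpa using hab
    have := congrArg e (h h2)
    simpa using this
  · exact Or.inr h

lemma exists_C (p : ℕ) [Fact p.Prime] (K W : Type) [Field K] [Fintype K] [Module (ZMod p) K]
    [AddCommGroup W] [Module (ZMod p) W] [Nontrivial W]
    (φ0 : K →ₗ[ZMod p] ZMod p) (t0 : K) (ht0 : φ0 t0 = 1)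
    (π : K →ₗ[ZMod p] W) (hπ : Function.Surjective π) :
    ∃ (C : Submodule (ZMod p) K) (c0 : K), c0 ∈ C ∧ c0 ≠ 0 ∧
      ∀ x y : K, π x = π y ↔ ∀ c ∈ C, φ0 (c * x) = φ0 (c * y) := by
  have hsm1 : ∀ (c : ZMod p) (x y : K), (c • x) * y = c • (x * y) :=
    fun c x y => ZMod.map_smul (AddMonoidHom.mulRight y) c x
  have hsm2 : ∀ (c : ZMod p) (x y : K), x * (c • y) = c • (x * y) :=
    fun c x y => ZMod.map_smul (AddMonoidHom.mulLeft x) c y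
  let BK : LinearMap.BilinForm (ZMod p) K :=
    LinearMap.mk₂ (ZMod p) (fun c x => φ0 (c * x))
      (fun a b x => by show φ0 ((a + b) * x) = φ0 (a * x) + φ0 (b * x); rw [add_mul, map_add])
      (fun r a x => by show φ0 ((r • a) * x) = r • φ0 (a * x); rw [hsm1, map_smul])
      (fun a x y => by show φ0 (a * (x + y)) = φ0 (a * x) + φ0 (a * y); rw [mul_add, map_add])
      (fun r x y => by show φ0 (x * (r • y)) = r • φ0 (x * y); rw [hsm2, map_smul])
  have hBK : ∀ c x : K, BK c x = φ0 (c * x) := fun c x => rfl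
  have hdual : ∀ x : K, x ≠ 0 → ∃ a : K, φ0 (a * x) ≠ 0 := by
    intro x hx
    refine ⟨t0 * x⁻¹, ?_⟩
    rw [mul_assoc, inv_mul_cancel₀ hx, mul_one, ht0]
    exact one_ne_zero
  have hnd : BK.Nondegenerate := by
    refine ⟨fun c hc => ?_, fun c hc => ?_⟩
    by_contra hc0
    obtain ⟨a, ha⟩ := hdual c hc0
    exact ha (by rw [mul_comm, ← hBK]; exact hc a)
    · by_contra hc0; obtain ⟨a, ha⟩ := hdual c hc0; exact ha (hc a)
  have hrefl : BK.IsRefl := by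
    intro x y h
    rw [hBK, mul_comm, ← hBK] at h
    exact h
  set M := LinearMap.ker π with hM
  set C := BK.orthogonal M with hC
  have horth : BK.orthogonal C = M := LinearMap.BilinForm.orthogonal_orthogonal hnd hrefl M
  have hbridge : ∀ x y : K, π x = π y ↔ ∀ c ∈ C, φ0 (c * x) = φ0 (c * y) := by
    intro x y
    rw [← LinearMap.sub_mem_ker_iff (f := π), ← hM, ← horth,
      LinearMap.BilinForm.mem_orthogonal_iff]
    constructor
    · intro h c hc
      have h2 := h c hc
      rw [hBK, mul_sub, map_sub, sub_eq_zero] at h2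
      exact h2
    · intro h c hc
      rw [hBK, mul_sub, map_sub, sub_eq_zero]
      exact h c hc
  by_cases hCbot : C = ⊥
  · exfalso
    have hMtop : M = ⊤ := by
      rw [← horth, hCbot, LinearMap.BilinForm.orthogonal_bot]
    obtain ⟨w, hw⟩ := exists_ne (0 : W)
    obtain ⟨x, rfl⟩ := hπ w
    have hx : x ∈ M := hMtop ▸ Submodule.mem_top
    exact hw (LinearMap.mem_ker.1 hx)
  · obtain ⟨c0, hc0C, hc0⟩ := (Submodule.ne_bot_iff C).1 hCbot
    exact ⟨C, c0, hc0C, hc0, hbridge⟩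

section AuxV

variable (p : ℕ) [Fact p.Prime] (K V : Type) [Field K] [Module (ZMod p) K]
  [AddCommGroup V] [Module K V] [Module (ZMod p) V]

lemma phi_nd_left (φ0 : K →ₗ[ZMod p] ZMod p) (t0 : K) (ht0 : φ0 t0 = 1)
    (j : V →ₗ[K] V →ₗ[K] K) (hndl : ∀ u : V, (∀ v : V, j u v = 0) → u = 0)
    (a : K) (ha : a ≠ 0) (u : V) (hu : ∀ v, φ0 (a * j u v) = 0) : u = 0 := by
  by_contra hne
  obtain ⟨w, hw⟩ : ∃ w, j u w ≠ 0 := by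
    by_contra h; push_neg at h; exact hne (hndl u h)
  have hfull : ∀ t : K, φ0 t = 0 := by
    intro t
    have h := hu (((a * j u w)⁻¹ * t) • w)
    rw [map_smul, smul_eq_mul] at h
    have harith : a * ((a * j u w)⁻¹ * t * j u w) = t := by
      field_simp
    rwa [harith] at h
  have h1 := hfull t0
  rw [ht0] at h1
  exact one_ne_zero h1

lemma phi_nd_right (φ0 : K →ₗ[ZMod p] ZMod p) (t0 : K) (ht0 : φ0 t0 = 1)
    (j : V →ₗ[K] V →ₗ[K] K) (hndr : ∀ v : V, (∀ u : V, j u v = 0) → v = 0)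
    (a : K) (ha : a ≠ 0) (v : V) (hu : ∀ u, φ0 (a * j u v) = 0) : v = 0 := by
  by_contra hne
  obtain ⟨w, hw⟩ : ∃ w, j w v ≠ 0 := by
    by_contra h; push_neg at h; exact hne (hndr v h)
  have hfull : ∀ t : K, φ0 t = 0 := by
    intro t
    have h := hu (((a * j w v)⁻¹ * t) • w)
    rw [map_smul, LinearMap.smul_apply, smul_eq_mul] at h
    have harith : a * ((a * j w v)⁻¹ * t * j w v) = t := by
      field_simp
    rwa [harith] at h
  have h1 := hfull t0
  rw [ht0] at h1
  exact one_ne_zero h1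

lemma exists_adj [Finite V] (φ0 : K →ₗ[ZMod p] ZMod p) (t0 : K) (ht0 : φ0 t0 = 1)
    (j : V →ₗ[K] V →ₗ[K] K)
    (hndr : ∀ v : V, (∀ u : V, j u v = 0) → v = 0)
    (hndl : ∀ u : V, (∀ v : V, j u v = 0) → u = 0)
    (c0 : K) (hc0 : c0 ≠ 0) :
    ∃ adj : Module.End (ZMod p) V → Module.End (ZMod p) V,
      ∀ f u v, φ0 (c0 * j u (adj f v)) = φ0 (c0 * j (f u) v) := by
  have hjs1 : ∀ (c : ZMod p) (u v : V), j (c • u) v = c • (j u v) := by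
    intro c u v
    exact ZMod.map_smul ((j.flip v).toAddMonoidHom) c u
  have hjs2 : ∀ (c : ZMod p) (u v : V), j u (c • v) = c • (j u v) := by
    intro c u v
    exact ZMod.map_smul (j u).toAddMonoidHom c v
  have hsm2 : ∀ (c : ZMod p) (x y : K), x * (c • y) = c • (x * y) :=
    fun c x y => ZMod.map_smul (AddMonoidHom.mulLeft x) c y
  let B : LinearMap.BilinForm (ZMod p) V := LinearMap.mk₂ (ZMod p)
    (fun u v => φ0 (c0 * j u v))
    (fun u1 u2 v => by
      show φ0 (c0 * j (u1 + u2) v) = φ0 (c0 * j u1 v) + φ0 (c0 * j u2 v)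
      rw [map_add, LinearMap.add_apply, mul_add, map_add])
    (fun r u v => by
      show φ0 (c0 * j (r • u) v) = r • φ0 (c0 * j u v)
      rw [hjs1, hsm2, map_smul])
    (fun u v1 v2 => by
      show φ0 (c0 * j u (v1 + v2)) = φ0 (c0 * j u v1) + φ0 (c0 * j u v2)
      rw [map_add, mul_add, map_add])
    (fun r u v => by
      show φ0 (c0 * j u (r • v)) = r • φ0 (c0 * j u v)
      rw [hjs2, hsm2, map_smul])
  have hnd : B.flip.Nondegenerate := by
    refine ⟨fun v hv => ?_, fun u hu => phi_nd_left p K V φ0 t0 ht0 j hndl c0 hc0 u (fun v => hu v)⟩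
    exact phi_nd_right p K V φ0 t0 ht0 j hndr c0 hc0 v (fun u => hv u)
  let D := LinearMap.BilinForm.toDual B.flip hnd
  refine ⟨fun f => D.symm.toLinearMap ∘ₗ (f.dualMap ∘ₗ D.toLinearMap), ?_⟩
  intro f u v
  have h1 : D (D.symm (f.dualMap (D v))) = f.dualMap (D v) :=
    D.apply_symm_apply _
  have h2 : B.flip (D.symm (f.dualMap (D v))) u = B.flip v (f u) := by
    rw [← LinearMap.BilinForm.toDual_def hnd (m := D.symm (f.dualMap (D v))) (n := u)]
    show D (D.symm (f.dualMap (D v))) u = B.flip v (f u)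
    rw [h1, LinearMap.dualMap_apply]
    rw [← LinearMap.BilinForm.toDual_def hnd (m := v) (n := f u)]
  exact h2

end AuxV

theorem adjoint_ring_of_quotient_form
    (p : ℕ) [Fact p.Prime] (K V W : Type)
    [Field K] [Fintype K] [CharP K p] [Module (ZMod p) K]
    [AddCommGroup V] [Module K V] [FiniteDimensional K V] [Nontrivial V]
    [Module (ZMod p) V]
    [AddCommGroup W] [Module (ZMod p) W] [Nontrivial W]
    (j : V →ₗ[K] V →ₗ[K] K)
    (halt : ∀ v : V, j v v = 0)
    (hndl : ∀ u : V, (∀ v : V, j u v = 0) → u = 0)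
    (hndr : ∀ v : V, (∀ u : V, j u v = 0) → v = 0)
    (π : K →ₗ[ZMod p] W) (hπ : Function.Surjective π) :
    ∃ S : Subring (Module.End (ZMod p) V),
      (S : Set (Module.End (ZMod p) V)) =
        {f : Module.End (ZMod p) V | ∃ g : Module.End (ZMod p) V,
          ∀ u v : V, π (j (f u) v) = π (j u (g v))} ∧
      (∀ fK : V →ₗ[K] V, ∃ f ∈ S, ∀ v : V, f v = fK v) ∧
      IsSimpleRing ↥S ∧
      (∀ U : Submodule (ZMod p) V,
        (∀ f ∈ S, ∀ u ∈ U, f u ∈ U) → U = ⊥ ∨ U = ⊤) ∧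
      IsField (Subring.center ↥S) ∧
      (∃ ι : Subring.center ↥S →+* K, Function.Injective ι) ∧
      (∀ f : Module.End (ZMod p) V,
        f ∈ S ↔ ∀ z : ↥S, z ∈ Subring.center ↥S →
          (z : Module.End (ZMod p) V) * f = f * (z : Module.End (ZMod p) V)) := by
  classical
  haveI hVfinite : Finite V := Module.finite_of_finite K
  -- a nonzero 𝔽_p-functional on K
  obtain ⟨φ0, t0, ht0⟩ : ∃ (φ0 : K →ₗ[ZMod p] ZMod p) (t0 : K), φ0 t0 = 1 := by
    let bK := Module.Basis.ofVectorSpace (ZMod p) K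
    haveI : Nonempty (Module.Basis.ofVectorSpaceIndex (ZMod p) K) := bK.index_nonempty
    obtain ⟨i0⟩ := this
    exact ⟨bK.coord i0, bK i0, by simp⟩
  obtain ⟨C, c0, hc0C, hc0, hπbr⟩ := exists_C p K W φ0 t0 ht0 π hπ
  obtain ⟨adj, hadj⟩ := exists_adj p K V φ0 t0 ht0 j hndr hndl c0 hc0
  -- cancellation
  have hcanR : ∀ w w' : V, (∀ u, φ0 (c0 * j u w) = φ0 (c0 * j u w')) → w = w' := by
    intro w w' h
    have h2 : w - w' = 0 := by
      refine phi_nd_right p K V φ0 t0 ht0 j hndr c0 hc0 _ fun u => ?_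
      rw [map_sub, mul_sub, map_sub, h u, sub_self]
    exact sub_eq_zero.1 h2
  have hcanL : ∀ x y : V, (∀ v, φ0 (c0 * j x v) = φ0 (c0 * j y v)) → x = y := by
    intro x y h
    have h2 : x - y = 0 := by
      refine phi_nd_left p K V φ0 t0 ht0 j hndl c0 hc0 _ fun v => ?_
      rw [map_sub, LinearMap.sub_apply, mul_sub, map_sub, h v, sub_self]
    exact sub_eq_zero.1 h2
  -- scalar multiplications as 𝔽_p-endomorphisms
  let L : K →+* Module.End (ZMod p) V :=
    { toFun := fun a => zlin p (DistribMulAction.toAddMonoidHom V a)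
      map_one' := by ext v; show (1 : K) • v = v; rw [one_smul]
      map_mul' := by intro a b; ext v; show (a * b) • v = a • (b • v); rw [mul_smul]
      map_zero' := by ext v; show (0 : K) • v = 0; rw [zero_smul]
      map_add' := by intro a b; ext v; show (a + b) • v = a • v + b • v; rw [add_smul] }
  have hjKl : ∀ (a : K) (u v : V), j (a • u) v = a * j u v := by
    intro a u v; rw [map_smul, LinearMap.smul_apply, smul_eq_mul]
  have hjKr : ∀ (a : K) (u v : V), j u (a • v) = a * j u v := by
    intro a u v; rw [map_smul, smul_eq_mul]
  -- adjoint uniqueness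
  have key1 : ∀ f g : Module.End (ZMod p) V,
      (∀ u v : V, π (j (f u) v) = π (j u (g v))) → g = adj f := by
    intro f g h
    refine LinearMap.ext fun v => hcanR _ _ fun u => ?_
    rw [hadj f u v]
    exact ((hπbr _ _).1 (h u v) c0 hc0C).symm
  -- f commutes with a ↔ adj f commutes with a
  have keyswap : ∀ (f : Module.End (ZMod p) V) (a : K),
      (∀ v, f (a • v) = a • f v) ↔ (∀ v, adj f (a • v) = a • adj f v) := by
    intro f a
    constructor
    · intro h v
      refine hcanR _ _ fun u => ?_
      calc φ0 (c0 * j u (adj f (a • v))) = φ0 (c0 * j (f u) (a • v)) := hadj f u (a • v)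
        _ = φ0 (c0 * j (a • f u) v) := by rw [hjKr, hjKl]
        _ = φ0 (c0 * j (f (a • u)) v) := by rw [h u]
        _ = φ0 (c0 * j (a • u) (adj f v)) := (hadj f (a • u) v).symm
        _ = φ0 (c0 * j u (a • adj f v)) := by rw [hjKl, hjKr]
    · intro h v
      refine hcanL _ _ fun w => ?_
      calc φ0 (c0 * j (f (a • v)) w) = φ0 (c0 * j (a • v) (adj f w)) := (hadj f (a • v) w).symm
        _ = φ0 (c0 * j v (a • adj f w)) := by rw [hjKl, hjKr]
        _ = φ0 (c0 * j v (adj f (a • w))) := by rw [h w]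
        _ = φ0 (c0 * j (f v) (a • w)) := hadj f v (a • w)
        _ = φ0 (c0 * j (a • f v) w) := by rw [hjKr, hjKl]
  have key2 : ∀ f g : Module.End (ZMod p) V,
      (∀ u v : V, π (j (f u) v) = π (j u (g v))) →
      ∀ a : K, a * c0 ∈ C → ∀ v, adj f (a • v) = a • adj f v := by
    intro f g h a haC v
    have hg := key1 f g h
    subst hg
    refine hcanR _ _ fun u => ?_
    have hc := (hπbr _ _).1 (h u v) (a * c0) haC
    have e1 : ∀ x : K, (a * c0) * x = c0 * (a * x) := fun x => by ring
    rw [e1, e1] at hc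
    calc φ0 (c0 * j u (adj f (a • v))) = φ0 (c0 * j (f u) (a • v)) := hadj f u (a • v)
      _ = φ0 (c0 * (a * j (f u) v)) := by rw [hjKr]
      _ = φ0 (c0 * (a * j u (adj f v))) := hc
      _ = φ0 (c0 * j u (a • adj f v)) := by rw [hjKr]
  have key3 : ∀ f : Module.End (ZMod p) V,
      (∀ a : K, a * c0 ∈ C → ∀ v, adj f (a • v) = a • adj f v) →
      ∀ u v : V, π (j (f u) v) = π (j u (adj f v)) := by
    intro f h u v
    refine (hπbr _ _).2 fun c hc => ?_
    by_cases hcz : c = 0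
    · subst hcz; rw [zero_mul, zero_mul]
    · have haR : (c * c0⁻¹) * c0 ∈ C := by
        rw [mul_assoc, inv_mul_cancel₀ hc0, mul_one]; exact hc
      have e1 : ∀ x : K, c * x = c0 * ((c * c0⁻¹) * x) := fun x => by
        field_simp
      rw [e1 (j (f u) v), e1 (j u (adj f v))]
      calc φ0 (c0 * ((c * c0⁻¹) * j (f u) v))
          = φ0 (c0 * j (f u) ((c * c0⁻¹) • v)) := by rw [hjKr]
        _ = φ0 (c0 * j u (adj f ((c * c0⁻¹) • v))) := (hadj f u _).symm
        _ = φ0 (c0 * j u ((c * c0⁻¹) • adj f v)) := by rw [h _ haR v]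
        _ = φ0 (c0 * ((c * c0⁻¹) * j u (adj f v))) := by rw [hjKr]
  -- the subfield data
  set R : Set K := {a : K | a * c0 ∈ C} with hRdef
  have hRtok : ∀ g : Module.End (ZMod p) V,
      (∀ a ∈ R, ∀ v, g (a • v) = a • g v) →
      ∀ a ∈ Subring.closure R, ∀ v, g (a • v) = a • g v := by
    intro g hg a ha v
    have hsub : Subring.closure R ≤ Subring.comap L (Subring.centralizer {g}) := by
      refine Subring.closure_le.2 fun a' ha' => ?_
      rw [SetLike.mem_coe, Subring.mem_comap, Subring.mem_centralizer_iff]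
      intro y hy
      rw [Set.mem_singleton_iff] at hy
      rw [hy]
      refine LinearMap.ext fun v' => ?_
      show g (a' • v') = a' • g v'
      exact hg a' ha' v'
    have h2 := hsub ha
    rw [Subring.mem_comap, Subring.mem_centralizer_iff] at h2
    have h3 := h2 g (Set.mem_singleton g)
    have h4 := congrArg (fun m : Module.End (ZMod p) V => m v) h3
    exact h4
  set S : Subring (Module.End (ZMod p) V) :=
    Subring.centralizer (⇑L '' (Subring.closure R : Set K)) with hSdef
  have hSmem : ∀ f : Module.End (ZMod p) V,
      f ∈ S ↔ ∀ a ∈ Subring.closure R, ∀ v, f (a • v) = a • f v := by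
    intro f
    rw [hSdef, Subring.mem_centralizer_iff]
    constructor
    · intro h a ha v
      have h3 := h (L a) ⟨a, ha, rfl⟩
      have h4 := congrArg (fun m : Module.End (ZMod p) V => m v) h3
      exact h4.symm
    · intro h y hy
      obtain ⟨a, ha, rfl⟩ := hy
      refine LinearMap.ext fun v => ?_
      show a • f v = f (a • v)
      exact (h a ha v).symm
  have hKlinS : ∀ fK : V →ₗ[K] V, zlin p fK.toAddMonoidHom ∈ S := by
    intro fK
    rw [hSmem]
    intro a ha v
    show fK (a • v) = a • fK v
    exact map_smul fK a v
  have hLS : ∀ x : K, L x ∈ S := by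
    intro x
    rw [hSmem]
    intro a ha v
    show x • (a • v) = a • (x • v)
    rw [smul_smul, smul_smul, mul_comm]
  -- main set equality
  have hmain : (S : Set (Module.End (ZMod p) V)) =
      {f : Module.End (ZMod p) V | ∃ g : Module.End (ZMod p) V,
        ∀ u v : V, π (j (f u) v) = π (j u (g v))} := by
    ext f
    simp only [SetLike.mem_coe, Set.mem_setOf_eq]
    constructor
    · intro hf
      refine ⟨adj f, key3 f ?_⟩
      intro a haC v
      exact (keyswap f a).1 (fun v' => (hSmem f).1 hf a (Subring.subset_closure haC) v') v
    · rintro ⟨g, hg⟩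
      rw [hSmem]
      have hR := key2 f g hg
      have hk := hRtok (adj f) (fun a ha v => hR a ha v)
      intro a ha
      exact (keyswap f a).2 (hk a ha)
  -- the field k and the endomorphism ring over it
  have hkField : IsField ↥(Subring.closure R) := Finite.isField_of_domain _
  letI : Field ↥(Subring.closure R) := hkField.toField
  letI : Module ↥(Subring.closure R) V := Module.compHom V (Subring.closure R).subtype
  haveI : Module.Finite ↥(Subring.closure R) V := Module.Finite.of_finite
  let e : ↥S ≃+* Module.End ↥(Subring.closure R) V :=
    { toFun := fun f =>
        { toFun := (f : Module.End (ZMod p) V)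
          map_add' := fun x y => map_add _ x y
          map_smul' := fun a v => (hSmem _).1 f.2 a a.2 v }
      invFun := fun h => ⟨zlin p h.toAddMonoidHom, (hSmem _).2 (fun a ha v => by
          exact h.map_smul ⟨a, ha⟩ v)⟩
      left_inv := fun f => Subtype.ext (LinearMap.ext fun v => rfl)
      right_inv := fun h => LinearMap.ext fun v => rfl
      map_mul' := fun f g => LinearMap.ext fun v => rfl
      map_add' := fun f g => LinearMap.ext fun v => rfl }
  haveI hEndSimple : IsSimpleRing (Module.End ↥(Subring.closure R) V) := by
    have hpos : 0 < Module.finrank ↥(Subring.closure R) V := Module.finrank_pos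
    haveI : Nonempty (Fin (Module.finrank ↥(Subring.closure R) V)) := ⟨⟨0, hpos⟩⟩
    exact simple_of_equiv (algEquivMatrix (Module.finBasis _ V)).symm.toRingEquiv
  haveI hSsimple : IsSimpleRing ↥S := simple_of_equiv e.symm
  -- irreducibility
  have hirr : ∀ U : Submodule (ZMod p) V,
      (∀ f ∈ S, ∀ u ∈ U, f u ∈ U) → U = ⊥ ∨ U = ⊤ := by
    intro U hU
    by_cases hUbot : U = ⊥
    · exact Or.inl hUbot
    · refine Or.inr ?_
      obtain ⟨x0, hx0U, hx0⟩ := (Submodule.ne_bot_iff U).1 hUbot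
      obtain ⟨w, hw⟩ : ∃ w, j x0 w ≠ 0 := by
        by_contra h; push_neg at h; exact hx0 (hndl x0 h)
      rw [Submodule.eq_top_iff']
      intro v
      have hfK : ((LinearMap.toSpanSingleton K V v).comp ((j x0 w)⁻¹ • j.flip w)) x0 = v := by
        show (((j x0 w)⁻¹ • j.flip w) x0) • v = v
        rw [LinearMap.smul_apply, LinearMap.flip_apply, smul_eq_mul, inv_mul_cancel₀ hw,
          one_smul]
      have h2 : ((LinearMap.toSpanSingleton K V v).comp ((j x0 w)⁻¹ • j.flip w)) x0 ∈ U :=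
        hU _ (hKlinS ((LinearMap.toSpanSingleton K V v).comp ((j x0 w)⁻¹ • j.flip w))) x0 hx0U
      rwa [hfK] at h2
  -- center analysis
  obtain ⟨u0, hu0⟩ := exists_ne (0 : V)
  obtain ⟨w0, hw0⟩ : ∃ w, j u0 w ≠ 0 := by
    by_contra h; push_neg at h; exact hu0 (hndl u0 h)
  set ψ : V →ₗ[K] K := (j u0 w0)⁻¹ • j.flip w0 with hψdef
  have hψ1 : ψ u0 = 1 := by
    show (j u0 w0)⁻¹ • (j.flip w0) u0 = 1
    rw [LinearMap.flip_apply, smul_eq_mul, inv_mul_cancel₀ hw0]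
  have hcent : ∀ z : ↥S, z ∈ Subring.center ↥S → ∀ v,
      (z : Module.End (ZMod p) V) v = ψ ((z : Module.End (ZMod p) V) u0) • v := by
    intro z hz v
    set ro : V →ₗ[K] V := (LinearMap.toSpanSingleton K V v).comp ψ with hrodef
    have h1 := Subring.mem_center_iff.1 hz ⟨zlin p ro.toAddMonoidHom, hKlinS ro⟩
    have hE : zlin p ro.toAddMonoidHom * (z : Module.End (ZMod p) V) =
        (z : Module.End (ZMod p) V) * zlin p ro.toAddMonoidHom :=
      congrArg Subtype.val h1
    have h3 : ro ((z : Module.End (ZMod p) V) u0) =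
        (z : Module.End (ZMod p) V) (ro u0) :=
      congrArg (fun m : Module.End (ZMod p) V => m u0) hE
    have h4 : ro u0 = v := by
      show ψ u0 • v = v
      rw [hψ1, one_smul]
    rw [h4] at h3
    have h5 : ro ((z : Module.End (ZMod p) V) u0) =
        ψ ((z : Module.End (ZMod p) V) u0) • v := rfl
    rw [h5] at h3
    exact h3.symm
  -- the center is a field
  have hcenter_isField : IsField ↥(Subring.center ↥S) := by
    refine ⟨⟨0, 1, fun h => ?_⟩, mul_comm, ?_⟩
    · have h2 : ((0 : ↥S) : Module.End (ZMod p) V) = ((1 : ↥S) : Module.End (ZMod p) V) := by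
        have h3 := congrArg Subtype.val h
        exact congrArg Subtype.val h3
      have h4 := congrArg (fun m : Module.End (ZMod p) V => m u0) h2
      exact hu0 (by simpa using h4.symm)
    · intro a ha
      set c := ψ (((a : ↥S) : Module.End (ZMod p) V) u0) with hcdef
      have haE : ∀ v, ((a : ↥S) : Module.End (ZMod p) V) v = c • v := fun v => hcent a.1 a.2 v
      have hc : c ≠ 0 := by
        intro h0
        apply ha
        apply Subtype.ext
        apply Subtype.ext
        refine LinearMap.ext fun v => ?_
        rw [haE v, h0, zero_smul]
        rfl
      have hLc : ((a : ↥S) : Module.End (ZMod p) V) = L c := LinearMap.ext fun v => haE v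
      have hccinv : L c * L c⁻¹ = 1 := by rw [← map_mul, mul_inv_cancel₀ hc, map_one]
      have hcinvc : L c⁻¹ * L c = 1 := by rw [← map_mul, inv_mul_cancel₀ hc, map_one]
      have hcen2 : (⟨L c⁻¹, hLS c⁻¹⟩ : ↥S) ∈ Subring.center ↥S := by
        rw [Subring.mem_center_iff]
        intro g
        have hg := Subring.mem_center_iff.1 a.2 g
        have hgE : (g : Module.End (ZMod p) V) * L c = L c * (g : Module.End (ZMod p) V) := by
          have h6 : (g : Module.End (ZMod p) V) * ((a : ↥S) : Module.End (ZMod p) V) =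
              ((a : ↥S) : Module.End (ZMod p) V) * (g : Module.End (ZMod p) V) :=
            congrArg Subtype.val hg
          rw [hLc] at h6
          exact h6
        apply Subtype.ext
        show (g : Module.End (ZMod p) V) * L c⁻¹ = L c⁻¹ * (g : Module.End (ZMod p) V)
        have h4 : L c * ((g : Module.End (ZMod p) V) * L c⁻¹) =
            L c * (L c⁻¹ * (g : Module.End (ZMod p) V)) := by
          calc L c * ((g : Module.End (ZMod p) V) * L c⁻¹)
              = (L c * (g : Module.End (ZMod p) V)) * L c⁻¹ := (mul_assoc _ _ _).symm
            _ = ((g : Module.End (ZMod p) V) * L c) * L c⁻¹ := by rw [hgE]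
            _ = (g : Module.End (ZMod p) V) * (L c * L c⁻¹) := mul_assoc _ _ _
            _ = (g : Module.End (ZMod p) V) := by rw [hccinv, mul_one]
            _ = (L c * L c⁻¹) * (g : Module.End (ZMod p) V) := by rw [hccinv, one_mul]
            _ = L c * (L c⁻¹ * (g : Module.End (ZMod p) V)) := mul_assoc _ _ _
        calc (g : Module.End (ZMod p) V) * L c⁻¹
            = 1 * ((g : Module.End (ZMod p) V) * L c⁻¹) := (one_mul _).symm
          _ = (L c⁻¹ * L c) * ((g : Module.End (ZMod p) V) * L c⁻¹) := by rw [hcinvc]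
          _ = L c⁻¹ * (L c * ((g : Module.End (ZMod p) V) * L c⁻¹)) := mul_assoc _ _ _
          _ = L c⁻¹ * (L c * (L c⁻¹ * (g : Module.End (ZMod p) V))) := by rw [h4]
          _ = L c⁻¹ * ((L c * L c⁻¹) * (g : Module.End (ZMod p) V)) := by rw [mul_assoc]
          _ = L c⁻¹ * (g : Module.End (ZMod p) V) := by rw [hccinv, one_mul]
      refine ⟨⟨⟨L c⁻¹, hLS c⁻¹⟩, hcen2⟩, ?_⟩
      apply Subtype.ext
      apply Subtype.ext
      show ((a : ↥S) : Module.End (ZMod p) V) * L c⁻¹ = 1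
      rw [hLc, hccinv]
  -- the embedding of the center into K
  have hzval : ∀ z : ↥(Subring.center ↥S), ∀ v,
      ((z : ↥S) : Module.End (ZMod p) V) v =
        ψ (((z : ↥S) : Module.End (ZMod p) V) u0) • v := fun z v => hcent z.1 z.2 v
  let ι : ↥(Subring.center ↥S) →+* K :=
    { toFun := fun z => ψ (((z : ↥S) : Module.End (ZMod p) V) u0)
      map_one' := by
        show ψ ((1 : Module.End (ZMod p) V) u0) = 1
        simpa using hψ1
      map_mul' := fun z1 z2 => by
        show ψ ((((z1 * z2 : ↥(Subring.center ↥S)) : ↥S) : Module.End (ZMod p) V) u0) = _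
        have h1 : (((z1 * z2 : ↥(Subring.center ↥S)) : ↥S) : Module.End (ZMod p) V) u0 =
            ((z1 : ↥S) : Module.End (ZMod p) V) (((z2 : ↥S) : Module.End (ZMod p) V) u0) := rfl
        rw [h1, hzval z2 u0, hzval z1 (ψ (((z2 : ↥S) : Module.End (ZMod p) V) u0) • u0),
          smul_smul, map_smul, smul_eq_mul, hψ1, mul_one]
        rw [map_smul, smul_eq_mul, hψ1, mul_one]
      map_zero' := by
        show ψ ((0 : Module.End (ZMod p) V) u0) = 0
        simp
      map_add' := fun z1 z2 => by
        show ψ ((((z1 + z2 : ↥(Subring.center ↥S)) : ↥S) : Module.End (ZMod p) V) u0) = _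
        have h1 : (((z1 + z2 : ↥(Subring.center ↥S)) : ↥S) : Module.End (ZMod p) V) u0 =
            ((z1 : ↥S) : Module.End (ZMod p) V) u0 +
              ((z2 : ↥S) : Module.End (ZMod p) V) u0 := rfl
        rw [h1, map_add] }
  have hιinj : Function.Injective ι := by
    intro z1 z2 h
    apply Subtype.ext
    apply Subtype.ext
    refine LinearMap.ext fun v => ?_
    rw [hzval z1 v, hzval z2 v]
    exact congrArg (fun t : K => t • v) h
  -- final membership characterization
  have hlast : ∀ f : Module.End (ZMod p) V,
      f ∈ S ↔ ∀ z : ↥S, z ∈ Subring.center ↥S →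
        (z : Module.End (ZMod p) V) * f = f * (z : Module.End (ZMod p) V) := by
    intro f
    constructor
    · intro hf z hz
      have h1 := Subring.mem_center_iff.1 hz ⟨f, hf⟩
      exact (congrArg Subtype.val h1).symm
    · intro h
      rw [hSdef, Subring.mem_centralizer_iff]
      intro y hy
      obtain ⟨a, ha, rfl⟩ := hy
      have hcenLa : (⟨L a, hLS a⟩ : ↥S) ∈ Subring.center ↥S := by
        rw [Subring.mem_center_iff]
        intro g
        apply Subtype.ext
        show (g : Module.End (ZMod p) V) * L a = L a * (g : Module.End (ZMod p) V)
        exact (Subring.mem_centralizer_iff.1 g.2 (L a) ⟨a, ha, rfl⟩).symm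
      exact h _ hcenLa
  refine ⟨S, hmain, ?_, hSsimple, hirr, hcenter_isField, ⟨ι, hιinj⟩, hlast⟩
  intro fK
  exact ⟨zlin p fK.toAddMonoidHom, hKlinS fK, fun v => rfl⟩
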